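/- Let û : [0,∞) → ℝ be continuously differentiable with û(0) = 0 and û′(t) = ∫₀^{min(√(2/t),1)} (û(t(1−x)) + 1 − û(t)) dx for all t > 0. Then û(t) = √(2t) − (1/12) log t + O(1) as t → ∞. -/

import Mathlib

open Set Real Filter



lemma sq_le_of (A B : ℝ) (hA : 0 ≤ A) (hB : 0 ≤ B) (h : A^2 ≤ B^2) : A ≤ B := by
  calc A = Real.sqrt (A^2) := (Real.sqrt_sq hA).symm
  _ ≤ Real.sqrt (B^2) := Real.sqrt_le_sqrt h
  _ = B := Real.sqrt_sq hB

lemma log_ub {x : ℝ} (h0 : 0 ≤ x) (h1 : x ≤ 1/2) : Real.log (1-x) ≤ -x - x^2/2 := by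
  have key : ∀ y ∈ Set.Icc (0:ℝ) (1/2), HasDerivAt (fun y => Real.log (1-y) + (y + y^2/2))
      (-(1)/(1-y) + (1 + y)) y := by
    intro y hy
    have hne : (1:ℝ) - y ≠ 0 := by simp only [Set.mem_Icc] at hy; nlinarith [hy.1, hy.2]
    have h1 : HasDerivAt (fun y : ℝ => 1 - y) (-1) y := by
      simpa using (hasDerivAt_id y).const_sub 1
    have h2 := (h1.log hne)
    have h3 : HasDerivAt (fun y : ℝ => y + y^2/2) (1 + y) y := by
      have := ((hasDerivAt_pow 2 y).div_const 2)
      have := (hasDerivAt_id y).add this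
      simpa [Pi.add_def] using this
    simpa [Pi.add_def] using h2.add h3
  have anti : AntitoneOn (fun y => Real.log (1-y) + (y + y^2/2)) (Set.Icc (0:ℝ) (1/2)) := by
    apply antitoneOn_of_deriv_nonpos (convex_Icc _ _)
    · intro y hy
      exact ((key y hy).continuousAt).continuousWithinAt
    · intro y hy
      rw [interior_Icc] at hy
      exact ((key y ⟨hy.1.le, hy.2.le⟩).differentiableAt).differentiableWithinAt
    · intro y hy
      rw [interior_Icc] at hy
      rw [(key y ⟨hy.1.le, hy.2.le⟩).deriv]
      have hpos : (0:ℝ) < 1 - y := by nlinarith [hy.2]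
      have h4 : 1 + y ≤ 1/(1-y) := by
        rw [le_div_iff₀ hpos]; nlinarith [hy.1]
      have h5 : -(1)/(1-y) = -(1/(1-y)) := by ring
      rw [h5]; linarith
  have := anti (Set.mem_Icc.2 ⟨le_refl 0, by norm_num⟩) (Set.mem_Icc.2 ⟨h0, h1⟩) h0
  simp only [Real.log_one] at this
  norm_num at this ⊢
  linarith

lemma log_lb {x : ℝ} (h0 : 0 ≤ x) (h1 : x ≤ 1/2) : -x - x^2/2 - x^3 ≤ Real.log (1-x) := by
  have key : ∀ y ∈ Set.Icc (0:ℝ) (1/2), HasDerivAt (fun y => Real.log (1-y) + (y + y^2/2 + y^3))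
      (-(1)/(1-y) + (1 + y + 3*y^2)) y := by
    intro y hy
    have hne : (1:ℝ) - y ≠ 0 := by simp only [Set.mem_Icc] at hy; nlinarith [hy.1, hy.2]
    have h1 : HasDerivAt (fun y : ℝ => 1 - y) (-1) y := by
      simpa using (hasDerivAt_id y).const_sub 1
    have h2 := (h1.log hne)
    have h3 : HasDerivAt (fun y : ℝ => y + y^2/2 + y^3) (1 + y + 3*y^2) y := by
      have ha := ((hasDerivAt_pow 2 y).div_const 2)
      have hb := (hasDerivAt_id y).add ha
      have hc := hb.add (hasDerivAt_pow 3 y)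
      simpa [Pi.add_def] using hc
    simpa [Pi.add_def] using h2.add h3
  have mono : MonotoneOn (fun y => Real.log (1-y) + (y + y^2/2 + y^3)) (Set.Icc (0:ℝ) (1/2)) := by
    apply monotoneOn_of_deriv_nonneg (convex_Icc _ _)
    · intro y hy
      exact ((key y hy).continuousAt).continuousWithinAt
    · intro y hy
      rw [interior_Icc] at hy
      exact ((key y ⟨hy.1.le, hy.2.le⟩).differentiableAt).differentiableWithinAt
    · intro y hy
      rw [interior_Icc] at hy
      rw [(key y ⟨hy.1.le, hy.2.le⟩).deriv]
      have hpos : (0:ℝ) < 1 - y := by nlinarith [hy.2]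
      have h4 : 1/(1-y) ≤ 1 + y + 3*y^2 := by
        rw [div_le_iff₀ hpos]; nlinarith [hy.1, hy.2]
      have h5 : -(1)/(1-y) = -(1/(1-y)) := by ring
      rw [h5]; linarith
  have := mono (Set.mem_Icc.2 ⟨le_refl 0, by norm_num⟩) (Set.mem_Icc.2 ⟨h0, h1⟩) h0
  simp only [Real.log_one] at this
  norm_num at this ⊢
  linarith

lemma sqrt_sandwich {x : ℝ} (h0 : 0 ≤ x) (h1 : x ≤ 1/2) :
    1 - 3/2*x + 3/8*x^2 + x^3/16 - x^4 ≤ (1-x)*Real.sqrt (1-x) ∧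
    (1-x)*Real.sqrt (1-x) ≤ 1 - 3/2*x + 3/8*x^2 + x^3/16 + x^4 := by
  have hx1 : (0:ℝ) ≤ 1 - x := by linarith
  set s := Real.sqrt (1-x) with hs_def
  have hs0 : 0 ≤ s := Real.sqrt_nonneg _
  have hs2 : s^2 = 1 - x := Real.sq_sqrt hx1
  have hB0 : 0 ≤ (1-x)*s := mul_nonneg hx1 hs0
  have hB2 : ((1-x)*s)^2 = (1-x)^3 := by rw [mul_pow, hs2]; ring
  have hx4 : x^4 ≤ x^3 * (1/2) := by nlinarith [pow_nonneg h0 3]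
  have hx3 : x^3 ≤ x^2 * (1/2) := by nlinarith [pow_nonneg h0 2]
  have hx2 : x^2 ≤ x * (1/2) := by nlinarith
  constructor
  · have hA0 : 0 ≤ 1 - 3/2*x + 3/8*x^2 + x^3/16 - x^4 := by nlinarith
    have hsq : (1 - 3/2*x + 3/8*x^2 + x^3/16 - x^4)^2 ≤ ((1-x)*s)^2 := by
      rw [hB2]
      nlinarith [pow_nonneg h0 4, pow_nonneg h0 5, pow_nonneg h0 6, pow_nonneg h0 7,
        pow_nonneg h0 8, hx4, hx3, hx2]
    exact sq_le_of _ _ hA0 hB0 hsq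
  · have hA0 : 0 ≤ 1 - 3/2*x + 3/8*x^2 + x^3/16 + x^4 := by nlinarith
    have hsq : ((1-x)*s)^2 ≤ (1 - 3/2*x + 3/8*x^2 + x^3/16 + x^4)^2 := by
      rw [hB2]
      nlinarith [pow_nonneg h0 4, pow_nonneg h0 5, pow_nonneg h0 6, pow_nonneg h0 7,
        pow_nonneg h0 8, hx4, hx3, hx2]
    exact sq_le_of _ _ hB0 hA0 hsq



lemma est {d : ℝ} (h0 : 0 < d) (h2 : d ≤ 1/2) :
    |(4/(3*d))*(1 - (1-d)*Real.sqrt (1-d)) + (1/12)*(d + (1-d)*Real.log (1-d)) + d - 2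
      - (d/2 - d^2/24)| ≤ 4*d^3 := by
  obtain ⟨hs_l, hs_u⟩ := sqrt_sandwich h0.le h2
  have hL_u := log_ub h0.le h2
  have hL_l := log_lb h0.le h2
  set s := (1-d)*Real.sqrt (1-d)
  set L := Real.log (1-d)
  have h1s_u : 1 - s ≤ d*(3/2 - 3/8*d - d^2/16 + d^3) := by nlinarith [hs_l]
  have h1s_l : d*(3/2 - 3/8*d - d^2/16 - d^3) ≤ 1 - s := by nlinarith [hs_u]
  have hkey : (4/(3*d))*(1-s) = 4*(1-s)/(3*d) := by ring
  have hterm_u : (4/(3*d))*(1-s) ≤ (4/3)*(3/2 - 3/8*d - d^2/16 + d^3) := by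
    rw [hkey, div_le_iff₀ (by positivity)]
    nlinarith [h1s_u]
  have hterm_l : (4/3)*(3/2 - 3/8*d - d^2/16 - d^3) ≤ (4/(3*d))*(1-s) := by
    rw [hkey, le_div_iff₀ (by positivity)]
    nlinarith [h1s_l]
  have hd1 : 0 ≤ 1 - d := by linarith
  have hlog_u : (1/12)*(d + (1-d)*L) ≤ (1/12)*(d + (1-d)*(-d-d^2/2)) := by
    have := mul_le_mul_of_nonneg_left hL_u hd1
    nlinarith [this]
  have hlog_l : (1/12)*(d + (1-d)*(-d-d^2/2-d^3)) ≤ (1/12)*(d + (1-d)*L) := by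
    have := mul_le_mul_of_nonneg_left hL_l hd1
    nlinarith [this]
  clear_value s L
  clear hs_l hs_u hL_u hL_l h1s_u h1s_l hkey
  generalize hA : (4/(3*d))*(1 - s) = A at hterm_u hterm_l ⊢
  generalize hM : (1/12)*(d + (1-d)*L) = M at hlog_u hlog_l ⊢
  rw [abs_le]
  constructor
  · linarith [hterm_l, hlog_l, pow_nonneg h0.le 3, pow_nonneg h0.le 4]
  · linarith [hterm_u, hlog_u, pow_nonneg h0.le 3, pow_nonneg h0.le 4]


noncomputable def phi (y : ℝ) : ℝ := Real.sqrt (2*y) - (1/12) * Real.log y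

lemma basic_facts {t : ℝ} (ht : 8 ≤ t) :
    0 < Real.sqrt (2/t) ∧ Real.sqrt (2/t) ≤ 1/2 ∧ (Real.sqrt (2/t))^2 = 2/t ∧
    Real.sqrt (2*t) = 2/(Real.sqrt (2/t)) := by
  have ht0 : (0:ℝ) < t := by linarith
  have h2t : (0:ℝ) < 2/t := by positivity
  have hd0 : 0 < Real.sqrt (2/t) := Real.sqrt_pos.2 h2t
  have hd2 : (Real.sqrt (2/t))^2 = 2/t := Real.sq_sqrt h2t.le
  have hdle : Real.sqrt (2/t) ≤ 1/2 := by
    nlinarith [hd2, hd0, (by rw [div_le_iff₀ ht0]; linarith : 2/t ≤ (1:ℝ)/4)]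
  refine ⟨hd0, hdle, hd2, ?_⟩
  have h1 : 2*t = (2/Real.sqrt (2/t))^2 := by
    rw [div_pow, hd2]
    field_simp
  rw [h1, Real.sqrt_sq (by positivity)]

lemma integral_phi {t : ℝ} (ht : 8 ≤ t) :
    (∫ x in (0:ℝ)..(Real.sqrt (2/t)), (phi (t*(1-x)) + 1 - phi t)) =
      (4/(3*Real.sqrt (2/t)))*(1 - (1-Real.sqrt (2/t))*Real.sqrt (1-Real.sqrt (2/t)))
      + (1/12)*(Real.sqrt (2/t) + (1-Real.sqrt (2/t))*Real.log (1-Real.sqrt (2/t)))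
      + Real.sqrt (2/t) - 2 := by
  obtain ⟨hd0, hdle, hd2, hst⟩ := basic_facts ht
  have ht0 : (0:ℝ) < t := by linarith
  set d := Real.sqrt (2/t) with hd_def
  -- antiderivative
  set H : ℝ → ℝ := fun x => -(2/3)*(2/d)*((1-x)*Real.sqrt (1-x))
      + (1/12)*((1-x)*Real.log (t*(1-x)) + x) + (1 - phi t)*x with hH_def
  have huIcc : Set.uIcc (0:ℝ) d = Set.Icc 0 d := Set.uIcc_of_le hd0.le
  have hkey : ∀ x ∈ Set.uIcc (0:ℝ) d, HasDerivAt H (phi (t*(1-x)) + 1 - phi t) x := by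
    intro x hx
    rw [huIcc, Set.mem_Icc] at hx
    have hx1 : (0:ℝ) < 1 - x := by linarith [hx.2, hdle]
    have harg : (0:ℝ) < t*(1-x) := by positivity
    -- part 1 : x ↦ (1-x) * sqrt (1-x)
    have p1 : HasDerivAt (fun x : ℝ => (1-x)*Real.sqrt (1-x)) (-(3/2)*Real.sqrt (1-x)) x := by
      have hg : HasDerivAt (fun y : ℝ => y * Real.sqrt y)
          (1 * Real.sqrt (1-x) + (1-x) * (1/(2*Real.sqrt (1-x)))) (1-x) :=
        (hasDerivAt_id (1-x)).mul (Real.hasDerivAt_sqrt hx1.ne')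
      have hlin : HasDerivAt (fun x : ℝ => 1 - x) (-1) x := by
        simpa using (hasDerivAt_id x).const_sub 1
      have := hg.comp x hlin
      refine this.congr_deriv ?_
      have hsne : Real.sqrt (1-x) ≠ 0 := by positivity
      have h1x : (1-x) = Real.sqrt (1-x) * Real.sqrt (1-x) := (Real.mul_self_sqrt hx1.le).symm
      field_simp
      nlinarith [h1x]
    -- part 2 : x ↦ (1-x) * log (t*(1-x)) + x
    have p2 : HasDerivAt (fun x : ℝ => (1-x)*Real.log (t*(1-x)) + x)
        (-Real.log (t*(1-x))) x := by
      have hlin : HasDerivAt (fun x : ℝ => 1 - x) (-1) x := by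
        simpa using (hasDerivAt_id x).const_sub 1
      have hinner : HasDerivAt (fun x : ℝ => t*(1-x)) (t*(-1)) x := hlin.const_mul t
      have hlog : HasDerivAt (fun x : ℝ => Real.log (t*(1-x))) ((t*(-1))/(t*(1-x))) x :=
        hinner.log harg.ne'
      have hprod := hlin.mul hlog
      have := hprod.add (hasDerivAt_id x)
      refine this.congr_deriv ?_
      field_simp
      ring
    have p3 : HasDerivAt (fun x : ℝ => (1 - phi t)*x) (1 - phi t) x := by
      simpa using (hasDerivAt_id x).const_mul (1 - phi t)
    have := ((p1.const_mul (-(2/3)*(2/d))).add (p2.const_mul (1/12))).add p3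
    refine this.congr_deriv (Eq.symm ?_)
    have hsqrt_mul : Real.sqrt (2*(t*(1-x))) = (2/d) * Real.sqrt (1-x) := by
      rw [show 2*(t*(1-x)) = (2*t)*(1-x) by ring, Real.sqrt_mul (by positivity), hst]
    show phi (t*(1-x)) + 1 - phi t = _
    rw [phi, hsqrt_mul]
    ring
  have hint : IntervalIntegrable (fun x => phi (t*(1-x)) + 1 - phi t) MeasureTheory.volume 0 d := by
    apply ContinuousOn.intervalIntegrable
    intro x hx
    rw [huIcc, Set.mem_Icc] at hx
    have hx1 : (0:ℝ) < 1 - x := by linarith [hx.2, hdle]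
    have harg : (0:ℝ) < t*(1-x) := by positivity
    have hb : ContinuousAt (fun x : ℝ => t*(1-x)) x := by fun_prop
    have hlogc : ContinuousAt (fun x : ℝ => Real.log (t*(1-x))) x := hb.log harg.ne'
    have hsq : ContinuousAt (fun x : ℝ => Real.sqrt (2*(t*(1-x)))) x := by fun_prop
    apply ContinuousAt.continuousWithinAt
    show ContinuousAt (fun x => Real.sqrt (2*(t*(1-x))) - (1/12)*Real.log (t*(1-x)) + 1 - phi t) x
    exact ((hsq.sub (continuousAt_const.mul hlogc)).add continuousAt_const).sub continuousAt_const
  have := intervalIntegral.integral_eq_sub_of_hasDerivAt hkey hint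
  rw [this]
  show H d - H 0 = _
  rw [hH_def]
  simp only
  rw [Real.log_mul ht0.ne' (by linarith [hdle] : (1:ℝ)-d ≠ 0)]
  rw [phi, hst]
  have h1 : Real.sqrt (1-(0:ℝ)) = 1 := by norm_num
  rw [show (1:ℝ)-0 = 1 by norm_num] at h1 ⊢
  rw [h1, mul_one, mul_one]
  field_simp
  ring




lemma hasDerivAt_phi {s : ℝ} (hs : 0 < s) :
    HasDerivAt phi (1/Real.sqrt (2*s) - 1/(12*s)) s := by
  have h2s : (0:ℝ) < 2*s := by linarith
  have h1 : HasDerivAt (fun y : ℝ => 2*y) 2 s := by simpa using (hasDerivAt_id s).const_mul 2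
  have hsq : HasDerivAt (fun y : ℝ => Real.sqrt (2*y)) (1/(2*Real.sqrt (2*s)) * 2) s :=
    (Real.hasDerivAt_sqrt h2s.ne').comp s h1
  have hlog : HasDerivAt (fun y : ℝ => (1/12) * Real.log y) ((1/12) * s⁻¹) s :=
    (Real.hasDerivAt_log hs.ne').const_mul (1/12)
  have := hsq.sub hlog
  refine this.congr_deriv ?_
  have : Real.sqrt (2*s) ≠ 0 := by positivity
  field_simp

lemma hasDerivAt_invsqrt {s : ℝ} (hs : 0 < s) :
    HasDerivAt (fun y : ℝ => (Real.sqrt y)⁻¹) (-(1/(2*(s*Real.sqrt s)))) s := by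
  have hsne : Real.sqrt s ≠ 0 := Real.sqrt_ne_zero'.2 hs
  have h := (Real.hasDerivAt_sqrt hs.ne').inv hsne
  refine h.congr_deriv ?_
  rw [Real.sq_sqrt hs.le]
  field_simp

lemma window {t x : ℝ} (ht : 8 ≤ t) (hx0 : 0 ≤ x) (hxd : x ≤ Real.sqrt (2/t)) :
    4 ≤ t*(1-x) ∧ t*(1-x) ≤ t := by
  have ht0 : (0:ℝ) < t := by linarith
  have htd : t * Real.sqrt (2/t) = Real.sqrt (2*t) := by
    conv_lhs => rw [show t = Real.sqrt (t^2) from (Real.sqrt_sq ht0.le).symm]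
    rw [← Real.sqrt_mul (sq_nonneg t)]
    congr 1
    field_simp
    rw [Real.sqrt_sq ht0.le]
  have hsle : Real.sqrt (2*t) ≤ t - 4 := by
    rw [show t - 4 = Real.sqrt ((t-4)^2) from (Real.sqrt_sq (by linarith)).symm]
    exact Real.sqrt_le_sqrt (by nlinarith)
  constructor
  · nlinarith [mul_le_mul_of_nonneg_left hxd ht0.le]
  · nlinarith [mul_nonneg ht0.le hx0]

lemma d3_lt {t : ℝ} (ht : 8 ≤ t) : 4*(Real.sqrt (2/t))^3 < 12/(t*Real.sqrt t) := by
  have ht0 : (0:ℝ) < t := by linarith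
  have hst : 0 < Real.sqrt t := Real.sqrt_pos.2 ht0
  have hsplit : Real.sqrt (2/t) = Real.sqrt 2 / Real.sqrt t :=
    Real.sqrt_div (by norm_num : (0:ℝ) ≤ 2) t
  have h2 : Real.sqrt 2 < 3/2 := by
    nlinarith [Real.sq_sqrt (by norm_num : (0:ℝ) ≤ 2), Real.sqrt_nonneg 2]
  have h2n : 0 ≤ Real.sqrt 2 := Real.sqrt_nonneg 2
  have hcube2 : (Real.sqrt 2)^3 = 2*Real.sqrt 2 := by
    rw [pow_succ, Real.sq_sqrt (by norm_num : (0:ℝ) ≤ 2)]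
  have hcubet : (Real.sqrt t)^3 = t*Real.sqrt t := by
    rw [pow_succ, Real.sq_sqrt ht0.le]
  rw [hsplit, div_pow, hcube2, hcubet]
  rw [show 4 * (2*Real.sqrt 2/(t*Real.sqrt t)) = (8*Real.sqrt 2)/(t*Real.sqrt t) by ring]
  gcongr
  linarith




lemma rhs_phi_bound {t : ℝ} (ht : 8 ≤ t) :
    |(∫ x in (0:ℝ)..(Real.sqrt (2/t)), (phi (t*(1-x)) + 1 - phi t))
      - (1/Real.sqrt (2*t) - 1/(12*t))| ≤ 4*(Real.sqrt (2/t))^3 := by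
  obtain ⟨hd0, hdle, hd2, hst⟩ := basic_facts ht
  have h1 : 1/Real.sqrt (2*t) = Real.sqrt (2/t)/2 := by
    rw [hst, one_div_div]
  have h2 : 1/(12*t) = (Real.sqrt (2/t))^2/24 := by
    rw [hd2]; ring
  rw [integral_phi ht, h1, h2]
  exact est hd0 hdle

lemma integrand_integrable {t : ℝ} (ht : 8 ≤ t) {F : ℝ → ℝ}
    (hF : ContinuousOn F (Set.Icc (4:ℝ) t)) (c : ℝ) :
    IntervalIntegrable (fun x => F (t*(1-x)) + 1 - c) MeasureTheory.volume 0 (Real.sqrt (2/t)) := by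
  obtain ⟨hd0, hdle, hd2, hst⟩ := basic_facts ht
  apply ContinuousOn.intervalIntegrable
  rw [Set.uIcc_of_le hd0.le]
  have hmaps : Set.MapsTo (fun x => t*(1-x)) (Set.Icc 0 (Real.sqrt (2/t))) (Set.Icc (4:ℝ) t) := by
    intro x hx
    rw [Set.mem_Icc] at hx ⊢
    exact window ht hx.1 hx.2
  have hinner : ContinuousOn (fun x : ℝ => t*(1-x)) (Set.Icc 0 (Real.sqrt (2/t))) := by fun_prop
  exact ((hF.comp hinner hmaps).add continuousOn_const).sub continuousOn_const

lemma phi_contOn {t : ℝ} (ht : 8 ≤ t) : ContinuousOn phi (Set.Icc (4:ℝ) t) := by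
  intro s hs
  have hs0 : (0:ℝ) < s := by linarith [hs.1]
  apply ContinuousAt.continuousWithinAt
  apply ContinuousAt.sub
  · fun_prop
  · exact continuousAt_const.mul (Real.continuousAt_log hs0.ne')

lemma invsqrt_contOn {t : ℝ} (ht : 8 ≤ t) :
    ContinuousOn (fun s : ℝ => (Real.sqrt s)⁻¹) (Set.Icc (4:ℝ) t) := by
  apply ContinuousOn.inv₀ (Real.continuous_sqrt.continuousOn)
  intro s hs
  exact Real.sqrt_ne_zero'.2 (by linarith [hs.1])


lemma comparison {f g f' g' : ℝ → ℝ} {a T : ℝ} (haT : a ≤ T)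
    (hf : ∀ t ∈ Set.Ici a, HasDerivWithinAt f (f' t) (Set.Ici a) t)
    (hg : ∀ t ∈ Set.Ici a, HasDerivWithinAt g (g' t) (Set.Ici a) t)
    (hinit : ∀ t ∈ Set.Icc a T, f t < g t)
    (hkey : ∀ t, T ≤ t → (∀ s ∈ Set.Icc a t, f s ≤ g s) → f t = g t → f' t < g' t) :
    ∀ t ∈ Set.Ici a, f t ≤ g t := by
  by_contra hcon
  push_neg at hcon
  obtain ⟨t₀, ht₀a, ht₀⟩ := hcon
  set S : Set ℝ := {t | a ≤ t ∧ g t < f t} with hS_def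
  have hS_ne : S.Nonempty := ⟨t₀, ht₀a, ht₀⟩
  have hS_bdd : BddBelow S := ⟨a, fun s hs => hs.1⟩
  set c := sInf S with hc_def
  have hca : a ≤ c := le_csInf hS_ne (fun s hs => hs.1)
  have hfc : ContinuousOn f (Set.Ici a) := fun t ht => (hf t ht).continuousWithinAt
  have hgc : ContinuousOn g (Set.Ici a) := fun t ht => (hg t ht).continuousWithinAt
  have hS_T : ∀ s ∈ S, T < s := by
    intro s hs
    by_contra hsT
    push_neg at hsT
    exact absurd (hinit s ⟨hs.1, hsT⟩) (not_lt.2 hs.2.le)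
  have hTc : T ≤ c := le_csInf hS_ne (fun s hs => (hS_T s hs).le)
  have hle_lt : ∀ s, a ≤ s → s < c → f s ≤ g s := by
    intro s hsa hsc
    by_contra hgs
    push_neg at hgs
    exact absurd (csInf_le hS_bdd (⟨hsa, hgs⟩ : s ∈ S)) (not_le.2 hsc)
  -- g c ≤ f c
  have h1 : g c ≤ f c := by
    have hc_cl : c ∈ closure S := csInf_mem_closure hS_ne hS_bdd
    obtain ⟨x, hxS, hxlim⟩ := mem_closure_iff_seq_limit.1 hc_cl
    have hxw : Filter.Tendsto x Filter.atTop (nhdsWithin c (Set.Ici a)) := by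
      rw [tendsto_nhdsWithin_iff]
      exact ⟨hxlim, Filter.Eventually.of_forall (fun n => (hxS n).1)⟩
    have hft : Filter.Tendsto (fun n => f (x n)) Filter.atTop (nhds (f c)) :=
      ((hfc c (Set.mem_Ici.2 hca)).tendsto).comp hxw
    have hgt : Filter.Tendsto (fun n => g (x n)) Filter.atTop (nhds (g c)) :=
      ((hgc c (Set.mem_Ici.2 hca)).tendsto).comp hxw
    exact le_of_tendsto_of_tendsto' hgt hft (fun n => (hxS n).2.le)
  have h2 : f c ≤ g c := by
    rcases eq_or_lt_of_le hTc with hEq | hlt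
    · exact (hinit c ⟨hca, hEq.symm.le⟩).le
    · have hac : a < c := lt_of_le_of_lt haT hlt
      have hc_cl : c ∈ closure (Set.Ico a c) := by
        rw [closure_Ico hac.ne]
        exact ⟨hac.le, le_refl c⟩
      have : Filter.NeBot (nhdsWithin c (Set.Ico a c)) :=
        mem_closure_iff_nhdsWithin_neBot.1 hc_cl
      have hft : Filter.Tendsto f (nhdsWithin c (Set.Ico a c)) (nhds (f c)) :=
        ((hfc c (Set.mem_Ici.2 hca)).mono Set.Ico_subset_Ici_self).tendsto
      have hgt : Filter.Tendsto g (nhdsWithin c (Set.Ico a c)) (nhds (g c)) :=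
        ((hgc c (Set.mem_Ici.2 hca)).mono Set.Ico_subset_Ici_self).tendsto
      exact le_of_tendsto_of_tendsto hft hgt
        (eventually_nhdsWithin_of_forall (fun s hs => hle_lt s hs.1 hs.2))
  have hfgc : f c = g c := le_antisymm h2 h1
  have hfg_le : ∀ s ∈ Set.Icc a c, f s ≤ g s := by
    intro s hs
    rcases lt_or_eq_of_le hs.2 with h | h
    · exact hle_lt s hs.1 h
    · rw [h, hfgc]
  have hder := hkey c hTc hfg_le hfgc
  -- slope argument
  have hh : HasDerivWithinAt (fun t => f t - g t) (f' c - g' c) (Set.Ici a) c :=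
    (hf c (Set.mem_Ici.2 hca)).sub (hg c (Set.mem_Ici.2 hca))
  have hslope := hasDerivWithinAt_iff_tendsto_slope.1 hh
  have hsub : Set.Ioi c ⊆ Set.Ici a \ {c} := by
    intro y hy
    exact ⟨le_trans hca (le_of_lt hy), ne_of_gt hy⟩
  have hslope' : Filter.Tendsto (slope (fun t => f t - g t) c) (nhdsWithin c (Set.Ioi c))
      (nhds (f' c - g' c)) := hslope.mono_left (nhdsWithin_mono c hsub)
  have hev : ∀ᶠ y in nhdsWithin c (Set.Ioi c), slope (fun t => f t - g t) c y < 0 :=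
    hslope'.eventually_lt_const (by linarith)
  have hev2 : ∀ᶠ y in nhdsWithin c (Set.Ioi c), f y < g y := by
    filter_upwards [hev, self_mem_nhdsWithin] with y hy hy'
    rw [slope_def_field] at hy
    have hyc : 0 < y - c := sub_pos.2 hy'
    have : (f y - g y - (f c - g c)) / (y - c) < 0 := hy
    rw [hfgc] at this
    simp only [sub_self, sub_zero] at this
    have := (div_neg_iff.1 this)
    rcases this with ⟨hn, _⟩ | ⟨_, hp⟩
    · linarith
    · linarith
  rw [eventually_nhdsWithin_iff, Metric.eventually_nhds_iff] at hev2
  obtain ⟨ε, hε, hball⟩ := hev2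
  have hcS : c ∉ S := by
    intro hcS
    exact absurd hcS.2 (not_lt.2 h2)
  obtain ⟨s, hsS, hs_lt⟩ := (csInf_lt_iff hS_bdd hS_ne).1 (by linarith : sInf S < c + ε)
  have hsc : c < s := lt_of_le_of_ne (csInf_le hS_bdd hsS) (fun h => hcS (h ▸ hsS))
  have : f s < g s := by
    apply hball (show dist s c < ε by rw [Real.dist_eq, abs_of_pos (by linarith)]; linarith)
    exact hsc
  exact absurd hsS.2 (not_lt.2 this.le)




/-- Let `û : [0,∞) → ℝ` be continuously differentiable with `û(0) = 0` and
`û′(t) = ∫₀^{min(√(2/t),1)} (û(t(1−x)) + 1 − û(t)) dx` for all `t > 0` (the value function of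
the self-similar policy with threshold `min(√(2/t),1)`). Then
`û(t) = √(2t) − (1/12) log t + O(1)` as `t → ∞`. -/
theorem statement11 (uhat uhat' : ℝ → ℝ)
    (hderiv : ∀ t ∈ Set.Ici (0 : ℝ), HasDerivWithinAt uhat (uhat' t) (Set.Ici (0 : ℝ)) t)
    (hcont : ContinuousOn uhat' (Set.Ici (0 : ℝ)))
    (hu0 : uhat 0 = 0)
    (heq : ∀ t > (0 : ℝ), uhat' t =
      ∫ x in (0 : ℝ)..(min (Real.sqrt (2 / t)) 1), (uhat (t * (1 - x)) + 1 - uhat t)) :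
    ∃ C T : ℝ, ∀ t ≥ T, |uhat t - (Real.sqrt (2 * t) - (1 / 12) * Real.log t)| ≤ C := by
  have hucont : ContinuousOn uhat (Set.Ici (0:ℝ)) :=
    fun t ht => (hderiv t ht).continuousWithinAt
  have hucont48 : ContinuousOn (fun s => uhat s - phi s) (Set.Icc (4:ℝ) 8) := by
    apply ContinuousOn.sub
    · exact hucont.mono (fun s hs => le_trans (by norm_num) hs.1)
    · exact (phi_contOn (le_refl 8)).mono (fun s hs => ⟨hs.1, hs.2⟩)
  obtain ⟨M, hM⟩ := isCompact_Icc.exists_bound_of_continuousOn hucont48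
  set C : ℝ := M + 25 with hC_def
  refine ⟨C, 8, ?_⟩
  -- the super- and sub-solutions
  set v : ℝ → ℝ := fun s => phi s - 24*(Real.sqrt s)⁻¹ + C with hv_def
  set v' : ℝ → ℝ := fun s => 1/Real.sqrt (2*s) - 1/(12*s) + 12/(s*Real.sqrt s) with hv'_def
  set w : ℝ → ℝ := fun s => phi s + 24*(Real.sqrt s)⁻¹ - C with hw_def
  set w' : ℝ → ℝ := fun s => 1/Real.sqrt (2*s) - 1/(12*s) - 12/(s*Real.sqrt s) with hw'_def
  have hMnn : 0 ≤ M := le_trans (abs_nonneg _) (by simpa using hM 4 (by norm_num))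
  -- derivatives
  have hvd : ∀ s ∈ Set.Ici (4:ℝ), HasDerivWithinAt v (v' s) (Set.Ici (4:ℝ)) s := by
    intro s hs
    have hs0 : (0:ℝ) < s := by have := Set.mem_Ici.1 hs; linarith
    have h := ((hasDerivAt_phi hs0).sub ((hasDerivAt_invsqrt hs0).const_mul 24)).add_const C
    have heqd : 1/Real.sqrt (2*s) - 1/(12*s) - 24*(-(1/(2*(s*Real.sqrt s)))) = v' s := by
      rw [hv'_def]; ring
    exact (heqd ▸ h).hasDerivWithinAt
  have hwd : ∀ s ∈ Set.Ici (4:ℝ), HasDerivWithinAt w (w' s) (Set.Ici (4:ℝ)) s := by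
    intro s hs
    have hs0 : (0:ℝ) < s := by have := Set.mem_Ici.1 hs; linarith
    have h := ((hasDerivAt_phi hs0).add ((hasDerivAt_invsqrt hs0).const_mul 24)).sub_const C
    have heqd : 1/Real.sqrt (2*s) - 1/(12*s) + 24*(-(1/(2*(s*Real.sqrt s)))) = w' s := by
      rw [hw'_def]; ring
    exact (heqd ▸ h).hasDerivWithinAt
  have hud : ∀ s ∈ Set.Ici (4:ℝ), HasDerivWithinAt uhat (uhat' s) (Set.Ici (4:ℝ)) s := by
    intro s hs
    have hs0 : (0:ℝ) ≤ s := le_trans (by norm_num) (Set.mem_Ici.1 hs)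
    exact (hderiv s hs0).mono (Set.Ici_subset_Ici.2 (by norm_num))
  -- inverse-sqrt bounds on [4,∞)
  have hinv_bound : ∀ s : ℝ, 4 ≤ s → (Real.sqrt s)⁻¹ ≤ 1/2 ∧ 0 < (Real.sqrt s)⁻¹ := by
    intro s hs
    have h2 : (2:ℝ) ≤ Real.sqrt s := by
      rw [show (2:ℝ) = Real.sqrt 4 by rw [show (4:ℝ) = 2^2 by norm_num, Real.sqrt_sq]; norm_num]
      exact Real.sqrt_le_sqrt hs
    have h0 : (0:ℝ) < Real.sqrt s := by linarith
    constructor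
    · rw [inv_le_comm₀ h0 (by norm_num)]
      linarith
    · positivity
  -- initial strips
  have hinit_v : ∀ s ∈ Set.Icc (4:ℝ) 8, uhat s < v s := by
    intro s hs
    have hMs := hM s hs
    rw [Real.norm_eq_abs, abs_le] at hMs
    have hi := hinv_bound s hs.1
    have : 24*(Real.sqrt s)⁻¹ ≤ 12 := by linarith [hi.1]
    simp only [hv_def, hC_def]
    linarith [hMs.1, hMs.2]
  have hinit_w : ∀ s ∈ Set.Icc (4:ℝ) 8, w s < uhat s := by
    intro s hs
    have hMs := hM s hs
    rw [Real.norm_eq_abs, abs_le] at hMs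
    have hi := hinv_bound s hs.1
    have : 24*(Real.sqrt s)⁻¹ ≤ 12 := by linarith [hi.1]
    simp only [hw_def, hC_def]
    linarith [hMs.1, hMs.2]
  -- continuity of v and w on windows
  have hvcont : ∀ t : ℝ, 8 ≤ t → ContinuousOn v (Set.Icc (4:ℝ) t) := by
    intro t ht
    intro s hs
    simp only [hv_def]
    exact ((phi_contOn ht s hs).sub (continuousWithinAt_const.mul (invsqrt_contOn ht s hs))).add
      continuousWithinAt_const
  have hwcont : ∀ t : ℝ, 8 ≤ t → ContinuousOn w (Set.Icc (4:ℝ) t) := by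
    intro t ht
    intro s hs
    simp only [hw_def]
    exact ((phi_contOn ht s hs).add (continuousWithinAt_const.mul (invsqrt_contOn ht s hs))).sub
      continuousWithinAt_const
  have hucont' : ∀ t : ℝ, 8 ≤ t → ContinuousOn uhat (Set.Icc (4:ℝ) t) := by
    intro t ht
    exact hucont.mono (fun s hs => le_trans (by norm_num) hs.1)
  -- key inequality for the supersolution
  have hkey_v : ∀ t, (8:ℝ) ≤ t → (∀ s ∈ Set.Icc (4:ℝ) t, uhat s ≤ v s) → uhat t = v t →
      uhat' t < v' t := by
    intro t ht hle htouch
    obtain ⟨hd0, hdle, hd2, hst⟩ := basic_facts ht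
    have ht0 : (0:ℝ) < t := by linarith
    rw [heq t ht0, min_eq_left (by linarith)]
    have hIu := integrand_integrable ht (hucont' t ht) (uhat t)
    have hIv := integrand_integrable ht (hvcont t ht) (v t)
    have hIphi := integrand_integrable ht (phi_contOn ht) (phi t)
    have h1 : (∫ x in (0:ℝ)..(Real.sqrt (2/t)), (uhat (t*(1-x)) + 1 - uhat t))
        ≤ ∫ x in (0:ℝ)..(Real.sqrt (2/t)), (v (t*(1-x)) + 1 - v t) := by
      apply intervalIntegral.integral_mono_on hd0.le hIu hIv
      intro x hx
      have hw := window ht hx.1 hx.2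
      have := hle (t*(1-x)) ⟨hw.1, hw.2⟩
      linarith [htouch]
    have h2 : (∫ x in (0:ℝ)..(Real.sqrt (2/t)), (v (t*(1-x)) + 1 - v t))
        ≤ ∫ x in (0:ℝ)..(Real.sqrt (2/t)), (phi (t*(1-x)) + 1 - phi t) := by
      apply intervalIntegral.integral_mono_on hd0.le hIv hIphi
      intro x hx
      have hwin := window ht hx.1 hx.2
      have hs0 : (0:ℝ) < t*(1-x) := by linarith [hwin.1]
      have hmono : Real.sqrt (t*(1-x)) ≤ Real.sqrt t := Real.sqrt_le_sqrt hwin.2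
      have hsp : (0:ℝ) < Real.sqrt (t*(1-x)) := Real.sqrt_pos.2 hs0
      have hinv : (Real.sqrt t)⁻¹ ≤ (Real.sqrt (t*(1-x)))⁻¹ :=
        inv_anti₀ hsp hmono
      simp only [hv_def]
      linarith
    have h3 := (abs_le.1 (rhs_phi_bound ht)).2
    have h4 := d3_lt ht
    have h5 : v' t = 1/Real.sqrt (2*t) - 1/(12*t) + 12/(t*Real.sqrt t) := rfl
    linarith
  -- key inequality for the subsolution
  have hkey_w : ∀ t, (8:ℝ) ≤ t → (∀ s ∈ Set.Icc (4:ℝ) t, w s ≤ uhat s) → w t = uhat t →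
      w' t < uhat' t := by
    intro t ht hle htouch
    obtain ⟨hd0, hdle, hd2, hst⟩ := basic_facts ht
    have ht0 : (0:ℝ) < t := by linarith
    rw [heq t ht0, min_eq_left (by linarith)]
    have hIu := integrand_integrable ht (hucont' t ht) (uhat t)
    have hIw := integrand_integrable ht (hwcont t ht) (w t)
    have hIphi := integrand_integrable ht (phi_contOn ht) (phi t)
    have h1 : (∫ x in (0:ℝ)..(Real.sqrt (2/t)), (w (t*(1-x)) + 1 - w t))
        ≤ ∫ x in (0:ℝ)..(Real.sqrt (2/t)), (uhat (t*(1-x)) + 1 - uhat t) := by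
      apply intervalIntegral.integral_mono_on hd0.le hIw hIu
      intro x hx
      have hwin := window ht hx.1 hx.2
      have := hle (t*(1-x)) ⟨hwin.1, hwin.2⟩
      linarith [htouch]
    have h2 : (∫ x in (0:ℝ)..(Real.sqrt (2/t)), (phi (t*(1-x)) + 1 - phi t))
        ≤ ∫ x in (0:ℝ)..(Real.sqrt (2/t)), (w (t*(1-x)) + 1 - w t) := by
      apply intervalIntegral.integral_mono_on hd0.le hIphi hIw
      intro x hx
      have hwin := window ht hx.1 hx.2
      have hs0 : (0:ℝ) < t*(1-x) := by linarith [hwin.1]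
      have hmono : Real.sqrt (t*(1-x)) ≤ Real.sqrt t := Real.sqrt_le_sqrt hwin.2
      have hsp : (0:ℝ) < Real.sqrt (t*(1-x)) := Real.sqrt_pos.2 hs0
      have hinv : (Real.sqrt t)⁻¹ ≤ (Real.sqrt (t*(1-x)))⁻¹ :=
        inv_anti₀ hsp hmono
      simp only [hw_def]
      linarith
    have h3 := (abs_le.1 (rhs_phi_bound ht)).1
    have h4 := d3_lt ht
    have h5 : w' t = 1/Real.sqrt (2*t) - 1/(12*t) - 12/(t*Real.sqrt t) := rfl
    linarith
  -- apply the comparison principle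
  have hle_v : ∀ t ∈ Set.Ici (4:ℝ), uhat t ≤ v t :=
    comparison (by norm_num) hud hvd hinit_v hkey_v
  have hle_w : ∀ t ∈ Set.Ici (4:ℝ), w t ≤ uhat t :=
    comparison (by norm_num) hwd hud hinit_w hkey_w
  -- conclude
  intro t ht
  have ht4 : (4:ℝ) ≤ t := by linarith
  have h1 := hle_v t ht4
  have h2 := hle_w t ht4
  have hi := hinv_bound t ht4
  have hphi : phi t = Real.sqrt (2*t) - 1/12 * Real.log t := rfl
  simp only [hv_def, hw_def] at h1 h2
  rw [abs_le]
  constructor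
  · rw [← hphi]; linarith [hi.2]
  · rw [← hphi]; linarith [hi.2]
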